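/- Let n ≥ 1 and let L ∈ ℂ^{n×n} be a symmetric matrix (L^T = L) whose kernel is exactly the span of the all-ones vector 1 ∈ ℂ^n. Fix an index 0 and let 1_0 ∈ ℂ^n be the corresponding standard basis vector. Then there exists a unique symmetric matrix X ∈ ℂ^{n×n} such that X L = I − 1 1_0^T and X 1_0 = 0. -/

import Mathlib

open Matrix

/-- For a symmetric complex matrix `L` whose kernel is exactly the span of the
all-ones vector, there exists a unique symmetric matrix `X` with `X * L = I - 1 1₀ᵀ` and
`X 1₀ = 0`. -/
theorem exists_unique_green_matrix (n : ℕ) (hn : 1 ≤ n) (v0 : Fin n)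
    (L : Matrix (Fin n) (Fin n) ℂ) (hLsym : Lᵀ = L)
    (hker : ∀ x : Fin n → ℂ, L.mulVec x = 0 ↔ ∃ c : ℂ, x = fun _ => c) :
    ∃! X : Matrix (Fin n) (Fin n) ℂ,
      Xᵀ = X ∧
      X * L = 1 - Matrix.vecMulVec (fun _ => (1 : ℂ)) (Pi.single v0 1) ∧
      X.mulVec (Pi.single v0 1) = 0 := by
  classical
  set e0 : Fin n → ℂ := Pi.single v0 1 with he0
  set ones : Fin n → ℂ := fun _ => 1 with hones
  have hLts : ∀ i j, L i j = L j i := fun i j => congrFun (congrFun hLsym j) i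
  have hL1 : L.mulVec ones = 0 := (hker ones).mpr ⟨1, rfl⟩
  have hdot : ∀ v : Fin n → ℂ, ∑ x, e0 x * v x = v v0 := by
    intro v
    simp [he0, Pi.single_apply]
  have hdot' : ∀ v : Fin n → ℂ, ∑ x, v x * e0 x = v v0 := by
    intro v
    simp [he0, Pi.single_apply]
  have hcolsum : ∀ j, ∑ i, L i j = 0 := by
    intro j
    have h := congrFun hL1 j
    simp [Matrix.mulVec, dotProduct, hones] at h
    calc ∑ i, L i j = ∑ i, L j i := Finset.sum_congr rfl fun i _ => hLts i j
      _ = 0 := h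
  have hsum : ∀ x : Fin n → ℂ, ∑ i, L.mulVec x i = 0 := by
    intro x
    calc ∑ i, L.mulVec x i = ∑ i, ∑ j, L i j * x j := by
          simp [Matrix.mulVec, dotProduct]
      _ = ∑ j, (∑ i, L i j) * x j := by
          rw [Finset.sum_comm]; simp [Finset.sum_mul]
      _ = 0 := by simp [hcolsum]
  set B : Matrix (Fin n) (Fin n) ℂ := L + vecMulVec e0 e0 with hB
  have hBmulVec : ∀ v : Fin n → ℂ, B.mulVec v = L.mulVec v + fun i => e0 i * v v0 := by
    intro v
    rw [hB, Matrix.add_mulVec]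
    congr 1
    funext i
    simp only [Matrix.mulVec, dotProduct, vecMulVec_apply, mul_assoc,
      ← Finset.mul_sum, he0]
    rw [hdot]
  -- B is invertible
  have hdet : B.det ≠ 0 := by
    intro hd
    obtain ⟨v, hv, hv0⟩ := (Matrix.exists_mulVec_eq_zero_iff).mpr hd
    rw [hBmulVec] at hv0
    have hLv : L.mulVec v = fun i => -(v v0) * e0 i := by
      funext i
      have := congrFun hv0 i
      simp at this
      linear_combination this
    have hvv0 : v v0 = 0 := by
      have h1 := hsum v
      rw [hLv] at h1
      simp only [he0, neg_mul, Finset.sum_neg_distrib, neg_eq_zero] at h1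
      rw [← Finset.mul_sum] at h1
      simpa [Finset.sum_pi_single'] using h1
    have hLv0 : L.mulVec v = 0 := by rw [hLv]; funext i; simp [hvv0]
    obtain ⟨c, hc⟩ := (hker v).mp hLv0
    have hc0 : c = 0 := by rw [hc] at hvv0; exact hvv0
    exact hv (by rw [hc, hc0]; rfl)
  have hBunit : IsUnit B.det := isUnit_iff_ne_zero.mpr hdet
  have hBinvB : B⁻¹ * B = 1 := Matrix.nonsing_inv_mul B hBunit
  -- B 1 = e0, so B⁻¹ e0 = 1
  have hBones : B.mulVec ones = e0 := by
    rw [hBmulVec, hL1]; funext i; simp [hones]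
  have hBinv_e0 : B⁻¹.mulVec e0 = ones := by
    rw [← hBones, Matrix.mulVec_mulVec, hBinvB, Matrix.one_mulVec]
  have hmulouter : ∀ (M : Matrix (Fin n) (Fin n) ℂ) (a b : Fin n → ℂ),
      M * vecMulVec a b = vecMulVec (M.mulVec a) b := by
    intro M a b
    ext i j
    simp [Matrix.mul_apply, vecMulVec_apply, Matrix.mulVec, dotProduct,
      Finset.sum_mul, mul_assoc, mul_comm (b j)]
  have houtermul : ∀ (a b : Fin n → ℂ) (M : Matrix (Fin n) (Fin n) ℂ),
      vecMulVec a b * M = vecMulVec a (Matrix.vecMul b M) := by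
    intro a b M
    ext i j
    simp [Matrix.mul_apply, vecMulVec_apply, Matrix.vecMul, dotProduct,
      Finset.mul_sum, mul_assoc]
  have honesL : Matrix.vecMul ones L = 0 := by
    funext j
    simp [Matrix.vecMul, dotProduct, hones]
    exact hcolsum j
  set X : Matrix (Fin n) (Fin n) ℂ := B⁻¹ - vecMulVec ones ones with hX
  have hXsym : Xᵀ = X := by
    have hBsym : Bᵀ = B := by
      ext i j
      simp [hB, Matrix.transpose_apply, vecMulVec_apply, hLts j i, mul_comm]
    have houtT : (vecMulVec ones ones)ᵀ = vecMulVec ones ones := by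
      ext i j
      simp [vecMulVec_apply, Matrix.transpose_apply, hones]
    rw [hX, Matrix.transpose_sub, Matrix.transpose_nonsing_inv, hBsym, houtT]
  have hXL : X * L = 1 - Matrix.vecMulVec ones e0 := by
    have hLeq : L = B - vecMulVec e0 e0 := by rw [hB, add_sub_cancel_right]
    calc X * L = B⁻¹ * L - vecMulVec ones (Matrix.vecMul ones L) := by
          rw [hX, Matrix.sub_mul, houtermul]
      _ = B⁻¹ * L := by rw [honesL]; ext i j; simp [vecMulVec_apply]
      _ = B⁻¹ * B - B⁻¹ * vecMulVec e0 e0 := by rw [hLeq, Matrix.mul_sub]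
      _ = 1 - Matrix.vecMulVec ones e0 := by
          rw [hBinvB, hmulouter, hBinv_e0]
  have hXe0 : X.mulVec e0 = 0 := by
    rw [hX, Matrix.sub_mulVec, hBinv_e0]
    funext i
    simp [Matrix.mulVec, dotProduct, vecMulVec_apply, he0, hones,
      Finset.sum_pi_single']
  refine ⟨X, ⟨hXsym, hXL, hXe0⟩, ?_⟩
  rintro Y ⟨hYsym, hYL, hYe0⟩
  set D : Matrix (Fin n) (Fin n) ℂ := Y - X with hD
  have hDL : D * L = 0 := by rw [hD, Matrix.sub_mul, hYL, hXL, sub_self]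
  have hDe0 : D.mulVec e0 = 0 := by rw [hD, Matrix.sub_mulVec, hYe0, hXe0, sub_self]
  have hrow : ∀ j, ∃ c : ℂ, (fun i => D j i) = fun _ => c := by
    intro j
    apply (hker _).mp
    funext i
    have h := congrFun (congrFun hDL j) i
    simp only [Matrix.mul_apply, Matrix.zero_apply] at h
    simp only [Matrix.mulVec, dotProduct, Pi.zero_apply]
    calc ∑ k, L i k * D j k = ∑ k, D j k * L k i := by
          refine Finset.sum_congr rfl fun k _ => ?_
          rw [hLts i k, mul_comm]
      _ = 0 := h
  have hD0 : D = 0 := by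
    ext j i
    obtain ⟨c, hc⟩ := hrow j
    have h1 : D j i = c := congrFun hc i
    have h2 : D j v0 = c := congrFun hc v0
    have h3 : D j v0 = 0 := by
      have h := congrFun hDe0 j
      simpa [Matrix.mulVec, dotProduct, he0, hdot', Pi.single_apply] using h
    rw [Matrix.zero_apply, h1, ← h2, h3]
  exact sub_eq_zero.mp hD0
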